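/- For every parallelized quantum 2-tester (Π₁, Π₂) with Π₁ + Π₂ = I₈ ⊗ X, there exists a parallelized quantum 2-tester (Π₁', Π₂') with Π₁' + Π₂' = I₈ ⊗ X' such that (1/2)·Tr(M₁Π₁' + M₂Π₂') = (1/2)·Tr(M₁Π₁ + M₂Π₂) and X' commutes with S ⊗ I₂, where S is the 4×4 swap operator exchanging the H1 and H2 factors. Consequently the optimal average success probability of (1,1)-equivalence determination under parallelized schemes is achieved with X commuting with the swap of H1 and H2. -/

import Mathlib

open MeasureTheory Matrix ComplexOrder

noncomputable section

/-- `SU(2)`: the special unitary group of 2×2 complex matrices. -/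
abbrev SU2 := Matrix.specialUnitaryGroup (Fin 2) ℂ

instance : MeasurableSpace SU2 := borel SU2

abbrev Q := Fin 2

abbrev Mat2 := Matrix Q Q ℂ

/-- The rank-one outer product `|v⟩⟨v|`. -/
def outer {n : Type*} (v : n → ℂ) : Matrix n n ℂ :=
  fun a b => v a * (starRingEnd ℂ) (v b)

/-- Index of the three-qubit factor `K1⊗K2⊗K3` (or `H1⊗H2⊗H3`). -/
abbrev Idx3 := Q × Q × Q

abbrev Mat8 := Matrix Idx3 Idx3 ℂ

/-- Index of the six-qubit space `K1⊗K2⊗K3⊗H1⊗H2⊗H3`. -/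
abbrev Idx6 := Idx3 × Idx3

abbrev Mat64 := Matrix Idx6 Idx6 ℂ

/-- Kronecker product of three qubit operators. -/
def kron3 (A B C : Mat2) : Mat8 :=
  fun p q => A p.1 q.1 * B p.2.1 q.2.1 * C p.2.2 q.2.2

/-- The unnormalized maximally entangled vector `|I⟩⟩ = Σ |ijk⟩⊗|ijk⟩`. -/
def ketI : Idx6 → ℂ := fun p => if p.1 = p.2 then 1 else 0

/-- `W ⊗ I₈`. -/
def WtI (W : Mat8) : Mat64 := fun p q => W p.1 q.1 * (if p.2 = q.2 then 1 else 0)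

/-- `|W⟩⟩ = (W ⊗ I₈)|I⟩⟩`. -/
def ketW (W : Mat8) : Idx6 → ℂ := WtI W *ᵥ ketI

/-- `M₁ = ∫∫ |U₁⊗U₂⊗U₁⟩⟩⟨⟨U₁⊗U₂⊗U₁| dμ(U₁)dμ(U₂)`, the integral taken entrywise. -/
def M1 (μ : Measure SU2) : Mat64 := fun a b =>
  ∫ U₁ : SU2, ∫ U₂ : SU2, outer (ketW (kron3 U₁ U₂ U₁)) a b ∂μ ∂μ

/-- `M₂ = ∫∫ |U₁⊗U₂⊗U₂⟩⟩⟨⟨U₁⊗U₂⊗U₂| dμ(U₁)dμ(U₂)`, the integral taken entrywise. -/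
def M2 (μ : Measure SU2) : Mat64 := fun a b =>
  ∫ U₁ : SU2, ∫ U₂ : SU2, outer (ketW (kron3 U₁ U₂ U₂)) a b ∂μ ∂μ

/-- `I₈ ⊗ X` : identity on `K1⊗K2⊗K3` tensored with `X` on `H1⊗H2⊗H3`. -/
def IdKX (X : Mat8) : Mat64 := fun p q => (if p.1 = q.1 then 1 else 0) * X p.2 q.2

/-- The swap operator `S` on `ℂ²⊗ℂ²`, `S(|x⟩⊗|y⟩) = |y⟩⊗|x⟩`. -/
def swap2 : Matrix (Q × Q) (Q × Q) ℂ := fun p q =>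
  if p.1 = q.2 ∧ p.2 = q.1 then 1 else 0

/-- `S ⊗ I₂` : the swap of the `H1` and `H2` factors, tensored with the identity on
`H3`. -/
def SwI : Mat8 := fun p q =>
  swap2 (p.1, p.2.1) (q.1, q.2.1) * (if p.2.2 = q.2.2 then 1 else 0)

/-! ### Auxiliary material -/

instance : SecondCountableTopology (Matrix (Fin 2) (Fin 2) ℂ) :=
  inferInstanceAs (SecondCountableTopology (Fin 2 → Fin 2 → ℂ))

instance : SecondCountableTopology SU2 :=
  TopologicalSpace.secondCountableTopology_induced _ _ Subtype.val

instance : BorelSpace SU2 := ⟨rfl⟩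

/-- The swap of the first two coordinates of an index triple. -/
def tau : Idx3 → Idx3 := fun x => (x.2.1, x.1, x.2.2)

lemma tau_tau (x : Idx3) : tau (tau x) = x := rfl

/-- The simultaneous swap on the `K` and `H` triples. -/
def sig : Idx6 → Idx6 := fun p => (tau p.1, tau p.2)

lemma sig_sig (p : Idx6) : sig (sig p) = p := rfl

/-- The permutation matrix of `sig`. -/
def Fm : Mat64 := fun p q => if sig p = q then 1 else 0

lemma Fm_mul_apply (M : Mat64) (a c : Idx6) : (Fm * M) a c = M (sig a) c := by
  simp [Fm, Matrix.mul_apply]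

lemma mul_Fm_apply (M : Mat64) (a c : Idx6) : (M * Fm) a c = M a (sig c) := by
  simp only [Matrix.mul_apply, Fm]
  rw [Finset.sum_eq_single (sig c)]
  · simp [sig_sig]
  · intro d _ hd
    rw [if_neg, mul_zero]
    intro h
    exact hd (by rw [← h, sig_sig])
  · simp

lemma Fm_conj_apply (M : Mat64) (a b : Idx6) : (Fm * M * Fm) a b = M (sig a) (sig b) := by
  rw [mul_Fm_apply, Fm_mul_apply]

lemma Fm_Fm : Fm * Fm = 1 := by
  ext a b
  rw [Fm_mul_apply]
  simp [Fm, sig_sig, Matrix.one_apply, eq_comm]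
  congr

lemma Fm_herm : Fmᴴ = Fm := by
  ext a b
  simp only [Matrix.conjTranspose_apply, Fm]
  have h : sig b = a ↔ sig a = b := by
    constructor <;> (rintro rfl; rw [sig_sig])
  by_cases hc : sig a = b
  · simp [hc, h.mpr hc]
  · have : ¬ _ = _ := fun hh => hc (h.mp hh)
    simp [hc, this]

lemma SwI_apply (a c : Idx3) : SwI a c = if tau a = c then 1 else 0 := by
  simp only [SwI, swap2, tau, Prod.ext_iff]
  split_ifs <;> simp_all

lemma SwI_mul_apply (M : Mat8) (a c : Idx3) : (SwI * M) a c = M (tau a) c := by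
  simp [SwI_apply, Matrix.mul_apply]

lemma mul_SwI_apply (M : Mat8) (a c : Idx3) : (M * SwI) a c = M a (tau c) := by
  simp only [Matrix.mul_apply, SwI_apply]
  rw [Finset.sum_eq_single (tau c)]
  · simp [tau_tau]
  · intro d _ hd
    rw [if_neg, mul_zero]
    intro h
    exact hd (by rw [← h, tau_tau])
  · simp

lemma SwI_conj_apply (M : Mat8) (a b : Idx3) : (SwI * M * SwI) a b = M (tau a) (tau b) := by
  rw [mul_SwI_apply, SwI_mul_apply]

lemma SwI_SwI : SwI * SwI = 1 := by
  ext a b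
  rw [SwI_mul_apply]
  simp [SwI_apply, tau_tau, Matrix.one_apply, eq_comm]
  congr

lemma SwI_herm : SwIᴴ = SwI := by
  ext a b
  simp only [Matrix.conjTranspose_apply, SwI_apply]
  have h : tau b = a ↔ tau a = b := by
    constructor <;> (rintro rfl; rw [tau_tau])
  by_cases hc : tau a = b
  · simp [hc, h.mpr hc]
  · have : ¬ _ = _ := fun hh => hc (h.mp hh)
    simp [hc, this]

lemma ketW_apply (W : Mat8) (p : Idx6) : ketW W p = W p.1 p.2 := by
  simp only [ketW, WtI, ketI, Matrix.mulVec, dotProduct]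
  rw [Fintype.sum_prod_type]
  simp [mul_ite, ite_mul]

lemma kron3_tau (A B C : Mat2) (p q : Idx3) :
    kron3 A B C (tau p) (tau q) = kron3 B A C p q := by
  simp only [kron3, tau]
  ring

lemma outer_sig (A B C : Mat2) (a b : Idx6) :
    outer (ketW (kron3 A B C)) (sig a) (sig b) = outer (ketW (kron3 B A C)) a b := by
  simp only [outer, ketW_apply, sig, kron3_tau]

/-- Entries of a special unitary matrix are bounded by 1. -/
lemma entry_bound (U : SU2) (i j : Q) : ‖(U : Mat2) i j‖ ≤ 1 := by
  have h : (U : Mat2) ∈ Matrix.unitaryGroup (Fin 2) ℂ := U.2.1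
  have h1 : star (U : Mat2) * (U : Mat2) = 1 := h.1
  have h3 : ∑ k, ‖(U : Mat2) k j‖ ^ 2 = 1 := by
    have := congrArg Complex.re (congrFun (congrFun h1 j) j)
    simpa [Matrix.mul_apply, Matrix.one_apply, Matrix.conjTranspose_apply,
      ← Complex.normSq_eq_norm_sq, Complex.normSq_apply, Complex.mul_re] using this
  have h4 : ‖(U : Mat2) i j‖ ^ 2 ≤ 1 := by
    rw [← h3]
    exact Finset.single_le_sum (f := fun k => ‖(U : Mat2) k j‖ ^ 2)
      (fun k _ => sq_nonneg _) (Finset.mem_univ i)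
  nlinarith [norm_nonneg ((U : Mat2) i j)]

lemma cont_entry (i j : Q) : Continuous fun U : SU2 => (U : Mat2) i j :=
  (continuous_apply j).comp ((continuous_apply i).comp continuous_subtype_val)

lemma outer_bound (U V : SU2) (a b : Idx6) :
    ‖outer (ketW (kron3 (V : Mat2) (U : Mat2) (U : Mat2))) a b‖ ≤ 1 := by
  simp only [outer, ketW_apply, kron3, _root_.map_mul, norm_mul, RCLike.norm_conj]
  have tri : ∀ x y z : ℝ, 0 ≤ x → x ≤ 1 → 0 ≤ y → y ≤ 1 → 0 ≤ z → z ≤ 1 →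
      x * y * z ≤ 1 := by
    intro x y z hx hx1 hy hy1 hz hz1
    calc x * y * z ≤ 1 * 1 * 1 := by gcongr
    _ = 1 := by ring
  have h1 := tri _ _ _ (norm_nonneg _) (entry_bound V a.1.1 a.2.1)
    (norm_nonneg _) (entry_bound U a.1.2.1 a.2.2.1)
    (norm_nonneg _) (entry_bound U a.1.2.2 a.2.2.2)
  have h2 := tri _ _ _ (norm_nonneg _) (entry_bound V b.1.1 b.2.1)
    (norm_nonneg _) (entry_bound U b.1.2.1 b.2.2.1)
    (norm_nonneg _) (entry_bound U b.1.2.2 b.2.2.2)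
  exact mul_le_one₀ h1 (by positivity) h2

lemma cont_integrand (a b : Idx6) :
    Continuous fun z : SU2 × SU2 =>
      outer (ketW (kron3 (z.2 : Mat2) (z.1 : Mat2) (z.1 : Mat2))) a b := by
  have cx : ∀ i j, Continuous fun z : SU2 × SU2 => ((z.1 : Mat2) i j) :=
    fun i j => (cont_entry i j).comp continuous_fst
  have cy : ∀ i j, Continuous fun z : SU2 × SU2 => ((z.2 : Mat2) i j) :=
    fun i j => (cont_entry i j).comp continuous_snd
  simp only [outer, ketW_apply, kron3]
  exact (((cy _ _).mul (cx _ _)).mul (cx _ _)).mul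
    (Complex.continuous_conj.comp (((cy _ _).mul (cx _ _)).mul (cx _ _)))

/-- The integrand of `M₂` (with its two variables swapped) is integrable on the product. -/
lemma integrand_integrable (μ : Measure SU2) [IsProbabilityMeasure μ] (a b : Idx6) :
    Integrable (Function.uncurry fun x y : SU2 =>
      outer (ketW (kron3 (y : Mat2) (x : Mat2) (x : Mat2))) a b) (μ.prod μ) := by
  have hc : Continuous fun z : SU2 × SU2 =>
      outer (ketW (kron3 (z.2 : Mat2) (z.1 : Mat2) (z.1 : Mat2))) a b := cont_integrand a b
  refine Integrable.mono' (integrable_const (1 : ℝ)) hc.aestronglyMeasurable ?_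
  exact Filter.Eventually.of_forall fun z => outer_bound z.1 z.2 a b

/-- Conjugating `M₁` by the simultaneous swap yields `M₂`. -/
lemma Fm_M1_Fm (μ : Measure SU2) [IsProbabilityMeasure μ] : Fm * M1 μ * Fm = M2 μ := by
  ext a b
  rw [Fm_conj_apply]
  show (∫ U₁ : SU2, ∫ U₂ : SU2, outer (ketW (kron3 U₁ U₂ U₁)) (sig a) (sig b) ∂μ ∂μ) = _
  have h1 : ∀ U₁ U₂ : SU2, outer (ketW (kron3 (U₁ : Mat2) U₂ U₁)) (sig a) (sig b)
      = outer (ketW (kron3 (U₂ : Mat2) U₁ U₁)) a b := fun U₁ U₂ => outer_sig _ _ _ a b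
  simp_rw [h1]
  exact integral_integral_swap (integrand_integrable μ a b)

lemma Fm_M2_Fm (μ : Measure SU2) [IsProbabilityMeasure μ] : Fm * M2 μ * Fm = M1 μ := by
  have h := congrArg (fun M => Fm * M * Fm) (Fm_M1_Fm μ)
  rw [← h, ← mul_assoc, ← mul_assoc, Fm_Fm, one_mul, mul_assoc, Fm_Fm, mul_one]

lemma psd_add {n : Type*} [Fintype n] {A B : Matrix n n ℂ}
    (hA : A.PosSemidef) (hB : B.PosSemidef) : (A + B).PosSemidef := by
  refine ⟨hA.1.add hB.1, fun x => ?_⟩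
  simpa [mul_add, add_mul] using add_nonneg (hA.2 x) (hB.2 x)

lemma half_nonneg : (0 : ℂ) ≤ (1/2 : ℂ) := by
  rw [Complex.le_def]
  norm_num

lemma psd_half {n : Type*} [Fintype n] {A : Matrix n n ℂ}
    (hA : A.PosSemidef) : ((1/2 : ℂ) • A).PosSemidef := by
  refine ⟨?_, fun x => ?_⟩
  · rw [Matrix.IsHermitian, Matrix.conjTranspose_smul, hA.1.eq]
    try norm_num
  · exact (hA.smul half_nonneg).2 x

lemma psd_conj_Fm {P : Mat64} (hP : P.PosSemidef) : (Fm * P * Fm).PosSemidef := by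
  have := hP.mul_mul_conjTranspose_same Fm
  rwa [Fm_herm] at this

lemma psd_conj_SwI {X : Mat8} (hX : X.PosSemidef) : (SwI * X * SwI).PosSemidef := by
  have := hX.mul_mul_conjTranspose_same SwI
  rwa [SwI_herm] at this

lemma tau_inj {a b : Idx3} (h : tau a = tau b) : a = b := by
  have := congrArg tau h
  rwa [tau_tau, tau_tau] at this

lemma IdKX_add (X Y : Mat8) : IdKX (X + Y) = IdKX X + IdKX Y := by
  ext p q
  simp [IdKX, mul_add]

lemma IdKX_smul (c : ℂ) (X : Mat8) : IdKX (c • X) = c • IdKX X := by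
  ext p q
  simp [IdKX]
  try ring

lemma Fm_IdKX_Fm (X : Mat8) : Fm * IdKX X * Fm = IdKX (SwI * X * SwI) := by
  ext p q
  rw [Fm_conj_apply]
  show (if (sig p).1 = (sig q).1 then (1:ℂ) else 0) * X (sig p).2 (sig q).2 = _
  have hiff : (sig p).1 = (sig q).1 ↔ p.1 = q.1 := by
    constructor
    · exact fun h => tau_inj h
    · intro h; show tau p.1 = tau q.1; rw [h]
  show _ = (if p.1 = q.1 then (1:ℂ) else 0) * (SwI * X * SwI) p.2 q.2
  rw [SwI_conj_apply]
  by_cases h : p.1 = q.1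
  · rw [if_pos (hiff.mpr h), if_pos h]; rfl
  · rw [if_neg (fun hh => h (hiff.mp hh)), if_neg h]; rfl

/-- Any parallelized tester can be replaced, without changing the average success
probability, by one whose normalization operator `X'` commutes with the swap of the
`H1` and `H2` factors. -/
theorem symmetrize_X_swap (μ : Measure SU2) [IsProbabilityMeasure μ]
    [μ.IsMulLeftInvariant]
    (P₁ P₂ : Mat64) (X : Mat8) (h₁ : P₁.PosSemidef) (h₂ : P₂.PosSemidef)
    (hX : X.PosSemidef) (hTr : X.trace = 1) (hsum : P₁ + P₂ = IdKX X) :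
    ∃ (P₁' P₂' : Mat64) (X' : Mat8),
      P₁'.PosSemidef ∧ P₂'.PosSemidef ∧ X'.PosSemidef ∧ X'.trace = 1 ∧
      P₁' + P₂' = IdKX X' ∧
      (1/2 : ℂ) * (M1 μ * P₁' + M2 μ * P₂').trace
        = (1/2 : ℂ) * (M1 μ * P₁ + M2 μ * P₂).trace ∧
      X' * SwI = SwI * X' := by
  refine ⟨(1/2 : ℂ) • (P₁ + Fm * P₂ * Fm), (1/2 : ℂ) • (P₂ + Fm * P₁ * Fm),
    (1/2 : ℂ) • (X + SwI * X * SwI), ?_, ?_, ?_, ?_, ?_, ?_, ?_⟩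
  · exact psd_half (psd_add h₁ (psd_conj_Fm h₂))
  · exact psd_half (psd_add h₂ (psd_conj_Fm h₁))
  · exact psd_half (psd_add hX (psd_conj_SwI hX))
  · -- trace
    have hT : (SwI * X * SwI).trace = X.trace := by
      rw [Matrix.trace_mul_cycle, SwI_SwI, one_mul]
    rw [Matrix.trace_smul, Matrix.trace_add, hT, hTr, smul_eq_mul]
    norm_num
  · -- sum
    rw [← smul_add]
    have : P₁ + Fm * P₂ * Fm + (P₂ + Fm * P₁ * Fm)
        = (P₁ + P₂) + Fm * (P₁ + P₂) * Fm := by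
      rw [mul_add, add_mul]
      abel
    rw [this, hsum, Fm_IdKX_Fm, ← IdKX_add, ← IdKX_smul]
  · -- trace equality
    have key1 : (M1 μ * (Fm * P₂ * Fm)).trace = (M2 μ * P₂).trace := by
      have e : M1 μ * (Fm * P₂ * Fm) = (M1 μ * Fm * P₂) * Fm := by
        rw [mul_assoc, mul_assoc, mul_assoc]
      rw [e, Matrix.trace_mul_comm, ← mul_assoc, ← mul_assoc, Fm_M1_Fm]
    have key2 : (M2 μ * (Fm * P₁ * Fm)).trace = (M1 μ * P₁).trace := by
      have e : M2 μ * (Fm * P₁ * Fm) = (M2 μ * Fm * P₁) * Fm := by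
        rw [mul_assoc, mul_assoc, mul_assoc]
      rw [e, Matrix.trace_mul_comm, ← mul_assoc, ← mul_assoc, Fm_M2_Fm]
    simp only [Matrix.mul_smul, Matrix.mul_add, Matrix.trace_add, Matrix.trace_smul,
      smul_eq_mul]
    rw [key1, key2]
    ring
  · -- commutation
    rw [smul_mul_assoc, mul_smul_comm, add_mul, mul_add]
    rw [mul_assoc (SwI * X) SwI SwI, SwI_SwI, mul_one]
    rw [← mul_assoc SwI (SwI * X) SwI, ← mul_assoc SwI SwI X, SwI_SwI, one_mul, add_comm]
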